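/- arXiv:0801.3025 — 2 statements merged into one kernel-verified Lean document; each statement's English description precedes it below -/
import Mathlib

section
/- Let 1 ≤ i ≤ s, write ξ_i = (k,t), and let p > k be such that the elements of M in column t are exactly {(j,t) : p ≤ j ≤ n}. If (b,c) ∈ B_i with k < b < p and t < c < k, then (c,t) ∉ B_{i−1}. -/
open Finset MvPolynomial

namespace Panov

/-- The set `A` of places `(i,j)` with `n ≥ i > j ≥ 1`. -/
def placesA (n : ℕ) : Finset (ℕ × ℕ) :=
  (Finset.range (n + 1) ×ˢ Finset.range (n + 1)).filter fun p => 1 ≤ p.2 ∧ p.2 < p.1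

/-- The rank of a place in the linear order `≻`:
`η ≻ ζ` iff `ordA n η < ordA n ζ`. -/
def ordA (n : ℕ) (p : ℕ × ℕ) : ℕ := p.2 * (n + 1) + (n - p.1)

/-- The `≻`-greatest element of a (nonempty) set `B` of places:
the element with the minimal value of `ordA`. -/
def xiOf (n : ℕ) (B : Finset (ℕ × ℕ)) : ℕ × ℕ :=
  let m := WithTop.untopD 0 ((B.image (ordA n)).min)
  (n - m % (n + 1), m / (n + 1))

/-- The places that get the symbol `−` at the current step, when the
current set of unfilled places is `B`. -/
def minusSet (n : ℕ) (B : Finset (ℕ × ℕ)) : Finset (ℕ × ℕ) :=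
  B.filter fun p =>
    p.1 = (xiOf n B).1 ∧ (xiOf n B).2 < p.2 ∧ p.2 < (xiOf n B).1 ∧ (p.2, (xiOf n B).2) ∈ B

/-- The places that get the symbol `+` at the current step. -/
def plusSet (n : ℕ) (B : Finset (ℕ × ℕ)) : Finset (ℕ × ℕ) :=
  B.filter fun p =>
    p.2 = (xiOf n B).2 ∧ (xiOf n B).2 < p.1 ∧ p.1 < (xiOf n B).1 ∧ ((xiOf n B).1, p.1) ∈ B

/-- `Bset n M i` is the set of places unfilled after step `i` of the diagram. -/
def Bset (n : ℕ) (M : Finset (ℕ × ℕ)) : ℕ → Finset (ℕ × ℕ)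
  | 0 => placesA n \ M
  | i + 1 =>
      Bset n M i \
        insert (xiOf n (Bset n M i)) (minusSet n (Bset n M i) ∪ plusSet n (Bset n M i))

/-- `ξ_i`, the place that receives `⊗` at step `i ≥ 1`. -/
def xiStep (n : ℕ) (M : Finset (ℕ × ℕ)) (i : ℕ) : ℕ × ℕ := xiOf n (Bset n M (i - 1))

/-- `C_i⁻`, the places filled with `−` at step `i ≥ 1`. -/
def Cminus (n : ℕ) (M : Finset (ℕ × ℕ)) (i : ℕ) : Finset (ℕ × ℕ) :=
  minusSet n (Bset n M (i - 1))

/-- `C_i⁺`, the places filled with `+` at step `i ≥ 1`. -/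
def Cplus (n : ℕ) (M : Finset (ℕ × ℕ)) (i : ℕ) : Finset (ℕ × ℕ) :=
  plusSet n (Bset n M (i - 1))

/-- `M ⊆ A` spans an ideal `𝔪` of `𝔫 = ut(n,K)`. -/
def IsIdealSet (n : ℕ) (M : Finset (ℕ × ℕ)) : Prop :=
  M ⊆ placesA n ∧
    (∀ p ∈ M, ∀ d, 1 ≤ d → d < p.2 → (p.1, d) ∈ M) ∧
    (∀ p ∈ M, ∀ c, p.1 < c → c ≤ n → (c, p.2) ∈ M)

/-- `s` is the number of steps after which the diagram is complete. -/
def IsNumSteps (n : ℕ) (M : Finset (ℕ × ℕ)) (s : ℕ) : Prop :=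
  Bset n M s = ∅ ∧ ∀ j < s, (Bset n M j).Nonempty


lemma mem_placesA_iff {n : ℕ} {q : ℕ × ℕ} :
    q ∈ placesA n ↔ q.1 ≤ n ∧ 1 ≤ q.2 ∧ q.2 < q.1 := by
  simp only [placesA, Finset.mem_filter, Finset.mem_product, Finset.mem_range,
    Nat.lt_succ_iff]
  constructor
  · rintro ⟨⟨h1, _⟩, h3, h4⟩; exact ⟨h1, h3, h4⟩
  · rintro ⟨h1, h3, h4⟩; exact ⟨⟨h1, le_trans (le_of_lt h4) h1⟩, h3, h4⟩

lemma Bset_subset_placesA (n : ℕ) (M : Finset (ℕ × ℕ)) :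
    ∀ j, Bset n M j ⊆ placesA n := by
  intro j
  induction j with
  | zero => exact Finset.sdiff_subset
  | succ j ih => exact le_trans Finset.sdiff_subset ih

lemma Bset_succ_subset (n : ℕ) (M : Finset (ℕ × ℕ)) (j : ℕ) :
    Bset n M (j + 1) ⊆ Bset n M j := Finset.sdiff_subset

lemma Bset_not_mem_M (n : ℕ) (M : Finset (ℕ × ℕ)) :
    ∀ j, ∀ q ∈ Bset n M j, q ∉ M := by
  intro j
  induction j with
  | zero => intro q hq; exact (Finset.mem_sdiff.1 hq).2
  | succ j ih => intro q hq; exact ih q (Bset_succ_subset n M j hq)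

lemma xiOf_spec {n : ℕ} {B : Finset (ℕ × ℕ)} (hB : B ⊆ placesA n)
    (hne : B.Nonempty) :
    xiOf n B ∈ B ∧ ∀ q ∈ B, ordA n (xiOf n B) ≤ ordA n q := by
  obtain ⟨m, hm⟩ := Finset.min_of_nonempty (hne.image (ordA n))
  have hmmem : m ∈ B.image (ordA n) := Finset.mem_of_min hm
  obtain ⟨q₀, hq₀B, hq₀⟩ := Finset.mem_image.1 hmmem
  have hq₀A := mem_placesA_iff.1 (hB hq₀B)
  have hxi : xiOf n B = q₀ := by
    have huntop : WithTop.untopD 0 ((B.image (ordA n)).min) = m := by rw [hm]; rfl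
    have hord : ordA n q₀ = q₀.2 * (n + 1) + (n - q₀.1) := rfl
    have h1 : m % (n + 1) = n - q₀.1 := by
      rw [← hq₀, hord, Nat.add_comm, Nat.add_mul_mod_self_right]
      exact Nat.mod_eq_of_lt (by omega)
    have h2 : m / (n + 1) = q₀.2 := by
      rw [← hq₀, hord, Nat.add_comm, Nat.add_mul_div_right _ _ (by omega : 0 < n + 1)]
      have : (n - q₀.1) / (n + 1) = 0 := Nat.div_eq_of_lt (by omega)
      omega
    show (n - WithTop.untopD 0 ((B.image (ordA n)).min) % (n + 1),
      WithTop.untopD 0 ((B.image (ordA n)).min) / (n + 1)) = q₀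
    rw [huntop, h1, h2]
    have h3 : n - (n - q₀.1) = q₀.1 := by omega
    rw [h3]
  refine ⟨hxi ▸ hq₀B, fun q hq => ?_⟩
  rw [hxi, hq₀]
  exact Finset.min_le_of_eq (Finset.mem_image_of_mem _ hq) hm

/-- Key invariant: if `(x,y)` and `(y,z)` are both unfilled after step `j` and
`(x,z) ∉ M`, then `(x,z)` is also unfilled after step `j`. -/
lemma Bset_trans (n : ℕ) (M : Finset (ℕ × ℕ)) (hM : IsIdealSet n M) :
    ∀ j, ∀ x y z, (x, y) ∈ Bset n M j → (y, z) ∈ Bset n M j →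
      (x, z) ∉ M → (x, z) ∈ Bset n M j := by
  intro j
  induction j with
  | zero =>
    intro x y z hxy hyz hxz
    simp only [Bset, Finset.mem_sdiff] at hxy hyz ⊢
    refine ⟨?_, hxz⟩
    have h1 := mem_placesA_iff.1 hxy.1
    have h2 := mem_placesA_iff.1 hyz.1
    simp only at h1 h2
    exact mem_placesA_iff.2 ⟨h1.1, h2.2.1, by omega⟩
  | succ j ih =>
    intro x y z hxy hyz hxz
    have hxyj : (x, y) ∈ Bset n M j := Bset_succ_subset n M j hxy
    have hyzj : (y, z) ∈ Bset n M j := Bset_succ_subset n M j hyz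
    have hxzj : (x, z) ∈ Bset n M j := ih x y z hxyj hyzj hxz
    have hne : (Bset n M j).Nonempty := ⟨_, hxyj⟩
    obtain ⟨hximem, hximin⟩ := xiOf_spec (Bset_subset_placesA n M j) hne
    set ξ := xiOf n (Bset n M j) with hξ
    have hξA := mem_placesA_iff.1 (Bset_subset_placesA n M j hximem)
    have hξM : ξ ∉ M := Bset_not_mem_M n M j ξ hximem
    have hxyA : x ≤ n ∧ 1 ≤ y ∧ y < x := mem_placesA_iff.1 (Bset_subset_placesA n M j hxyj)
    have hyzA : y ≤ n ∧ 1 ≤ z ∧ z < y := mem_placesA_iff.1 (Bset_subset_placesA n M j hyzj)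
    obtain ⟨hxn, hy1, hyx⟩ := hxyA
    obtain ⟨hyn, hz1, hzy⟩ := hyzA
    simp only [Bset, Finset.mem_sdiff]
    refine ⟨hxzj, fun hmem => ?_⟩
    simp only [Finset.mem_insert, Finset.mem_union, ← hξ] at hmem
    rcases hmem with hcase | hcase | hcase
    · -- (x,z) = ξ : then (x,y) would get a minus at this step
      have hx1 : x = ξ.1 := by rw [← hcase]
      have hz2 : z = ξ.2 := by rw [← hcase]
      have hminus : (x, y) ∈ minusSet n (Bset n M j) := by
        simp only [minusSet, Finset.mem_filter, ← hξ]
        refine ⟨hxyj, hx1, by omega, by omega, ?_⟩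
        rw [← hz2]; exact hyzj
      have hxy' := hxy
      simp only [Bset, Finset.mem_sdiff, Finset.mem_insert, Finset.mem_union, ← hξ] at hxy'
      exact hxy'.2 (Or.inr (Or.inl hminus))
    · -- (x,z) gets a minus: x = ξ.1, ξ.2 < z < ξ.1, (z, ξ.2) ∈ B_j
      simp only [minusSet, Finset.mem_filter, ← hξ] at hcase
      obtain ⟨_, hx1, hzlo, hzhi, hzξ⟩ := hcase
      by_cases hyξ : (y, ξ.2) ∈ Bset n M j
      · have hminus : (x, y) ∈ minusSet n (Bset n M j) := by
          simp only [minusSet, Finset.mem_filter, ← hξ]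
          exact ⟨hxyj, hx1, by omega, by omega, hyξ⟩
        have hxy' := hxy
        simp only [Bset, Finset.mem_sdiff, Finset.mem_insert, Finset.mem_union, ← hξ] at hxy'
        exact hxy'.2 (Or.inr (Or.inl hminus))
      · have hyξM : (y, ξ.2) ∈ M := by
          by_contra hno
          exact hyξ (ih y z ξ.2 hyzj hzξ hno)
        have hm : (x, ξ.2) ∈ M := hM.2.2 (y, ξ.2) hyξM x hyx hxn
        rw [hx1] at hm
        exact hξM hm
    · -- (x,z) gets a plus: z = ξ.2, ξ.2 < x < ξ.1, (ξ.1, x) ∈ B_j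
      simp only [plusSet, Finset.mem_filter, ← hξ] at hcase
      obtain ⟨_, hz2, hxlo, hxhi, hξx⟩ := hcase
      by_cases hξy : (ξ.1, y) ∈ Bset n M j
      · have hplus : (y, z) ∈ plusSet n (Bset n M j) := by
          simp only [plusSet, Finset.mem_filter, ← hξ]
          exact ⟨hyzj, hz2, by omega, by omega, hξy⟩
        have hyz' := hyz
        simp only [Bset, Finset.mem_sdiff, Finset.mem_insert, Finset.mem_union, ← hξ] at hyz'
        exact hyz'.2 (Or.inr (Or.inr hplus))
      · have hξyM : (ξ.1, y) ∈ M := by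
          by_contra hno
          exact hξy (ih ξ.1 x y hξx hxyj hno)
        have hm : (ξ.1, ξ.2) ∈ M := hM.2.1 (ξ.1, y) hξyM ξ.2 hξA.2.1 (by omega)
        exact hξM hm

/-- If `(b,c) ∈ B_i` with `k < b < p` and `t < c < k` (where `ξ_i = (k,t)` and
the elements of `M` in column `t` are exactly `{(j,t) : p ≤ j ≤ n}`), then
`(c,t) ∉ B_{i−1}`. -/
theorem case2_column_filled (K : Type*) [Field K] [CharZero K]
    (n s : ℕ) (hn : 2 ≤ n) (M : Finset (ℕ × ℕ))
    (hM : IsIdealSet n M) (hs : IsNumSteps n M s)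
    (i k t p : ℕ) (hi1 : 1 ≤ i) (his : i ≤ s)
    (hkt : xiStep n M i = (k, t)) (hkp : k < p)
    (hMp : ∀ j, (j, t) ∈ M ↔ p ≤ j ∧ j ≤ n)
    (b c : ℕ) (hbc : (b, c) ∈ Bset n M i)
    (hkb : k < b) (hbp : b < p) (htc : t < c) (hck : c < k) :
    (c, t) ∉ Bset n M (i - 1) := by
  intro hct
  have hij : i - 1 + 1 = i := Nat.succ_pred_eq_of_pos hi1
  have hbc' : (b, c) ∈ Bset n M (i - 1) := by
    rw [← hij] at hbc; exact Bset_succ_subset n M (i - 1) hbc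
  have hbtM : (b, t) ∉ M := fun h => by have := (hMp b).1 h; omega
  have hbt : (b, t) ∈ Bset n M (i - 1) := Bset_trans n M hM (i - 1) b c t hbc' hct hbtM
  have hne : (Bset n M (i - 1)).Nonempty := hs.2 (i - 1) (by omega)
  obtain ⟨hmem, hmin⟩ := xiOf_spec (Bset_subset_placesA n M (i - 1)) hne
  simp only [xiStep] at hkt
  have hle := hmin _ hbt
  rw [hkt] at hle
  have hbn : b ≤ n := (mem_placesA_iff.1 (Bset_subset_placesA n M (i - 1) hbc')).1
  simp only [ordA] at hle
  omega
end Panov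
end

section
/- Let 1 ≤ i ≤ s, write ξ_i = (k,t), and let p > k be such that the elements of M in column t are exactly {(j,t) : p ≤ j ≤ n}. For (a,k) ∈ B_i^{(3)} (i.e. p ≤ a ≤ n) set ỹ_{ak} = (y_{ak}y_{kt} + Σ_{(j,t)∈B_{i−1}} y_{aj}y_{jt})·y_{kt}^{−1}, and for (b,c) ∈ B_i^{(1.1)} set ỹ_{bc} = (y_{bc}y_{kt} − y_{bt}y_{kc})·y_{kt}^{−1}. Then in the localized Poisson algebra S(ℒ_{i−1})_{y_{kt}} one has {ỹ_{ak}, ỹ_{bc}} = 0 mod 𝔪. -/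
open Finset MvPolynomial

namespace Panov

/-- The places indexing the coordinates on `ℒ* `, i.e. `A ∖ M`. -/
def B0 (n : ℕ) (M : Finset (ℕ × ℕ)) : Finset (ℕ × ℕ) := placesA n \ M

/-- The type of places indexing the coordinates `y_η` on `ℒ*`. -/
abbrev Pl (n : ℕ) (M : Finset (ℕ × ℕ)) : Type := {p : ℕ × ℕ // p ∈ B0 n M}

/-- `K[ℒ*] = S(ℒ)`, the polynomial algebra in the variables
`{y_η : η ∈ A ∖ M}`. -/
abbrev PolyL (K : Type) [Field K] (n : ℕ) (M : Finset (ℕ × ℕ)) : Type :=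
  MvPolynomial (Pl n M) K

/-- The structure constants of the Poisson bracket on `K[ℒ*]`:
`{y_η, y_ζ} = [y_η, y_ζ] mod 𝔪`, where for `η = (a,b)`, `ζ = (c,d)` one has
`[e_{ab}, e_{cd}] = δ_{bc} e_{ad} − δ_{da} e_{cb}` and the variables from `M`
are set to `0`. -/
noncomputable def structConst (K : Type) [Field K] (n : ℕ) (M : Finset (ℕ × ℕ))
    (η ζ : Pl n M) : PolyL K n M :=
  (if h : η.1.2 = ζ.1.1 ∧ (η.1.1, ζ.1.2) ∈ B0 n M then X ⟨(η.1.1, ζ.1.2), h.2⟩ else 0)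
    - (if h : ζ.1.2 = η.1.1 ∧ (ζ.1.1, η.1.2) ∈ B0 n M then X ⟨(ζ.1.1, η.1.2), h.2⟩ else 0)

/-- The Poisson bracket on `K[ℒ*]`, extending `{y_η, y_ζ} = [y_η, y_ζ] mod 𝔪`
as a biderivation:  `{P,Q} = ∑_{η,ζ} ∂P/∂y_η · ∂Q/∂y_ζ · {y_η, y_ζ}`. -/
noncomputable def pb (K : Type) [Field K] (n : ℕ) (M : Finset (ℕ × ℕ))
    (P Q : PolyL K n M) : PolyL K n M :=
  ∑ η : Pl n M, ∑ ζ : Pl n M,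
    pderiv η P * pderiv ζ Q * structConst K n M η ζ

/-- A Poisson bracket on a commutative `K`-algebra `A`: a skew-symmetric
`K`-bilinear bracket satisfying the Leibniz rule and the Jacobi identity. -/
structure PoissonStr (K : Type) [Field K] (A : Type*) [CommRing A] [Algebra K A] where
  br : A → A → A
  add_left : ∀ a b c, br (a + b) c = br a c + br b c
  smul_left : ∀ (k : K) (a b : A), br (k • a) b = k • br a b
  skew : ∀ a b, br a b = -br b a
  leibniz : ∀ a b c, br a (b * c) = br a b * c + b * br a c
  jacobi : ∀ a b c, br a (br b c) = br (br a b) c + br b (br a c)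

/-- The localization `S(ℒ_{i−1})_z` (and of any `S(ℒ_j)`) realized inside the
localization of `K[ℒ*]` away from the variable `z = y_v`. -/
abbrev LocAway (K : Type) [Field K] (n : ℕ) (M : Finset (ℕ × ℕ)) (v : Pl n M) : Type :=
  Localization.Away (X v : PolyL K n M)

/-- The image of the coordinate `y_q` in the localization; it is interpreted
as `0` when `q ∈ M` (i.e. everything is taken mod `𝔪`). -/
noncomputable def Xloc (K : Type) [Field K] (n : ℕ) (M : Finset (ℕ × ℕ))
    (v : Pl n M) (q : ℕ × ℕ) : LocAway K n M v :=
  if h : q ∈ B0 n M then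
    algebraMap (PolyL K n M) (LocAway K n M v) (X (⟨q, h⟩ : Pl n M))
  else 0

/-- The inverse `z^{−1} = y_{kt}^{−1}` in the localization. -/
noncomputable def invZ (K : Type) [Field K] (n : ℕ) (M : Finset (ℕ × ℕ))
    (v : Pl n M) : LocAway K n M v :=
  IsLocalization.Away.invSelf (X v : PolyL K n M)

/-- The subset `B_i^{(1.1)}` of `B_i` (relative to `ξ_i = (k,t)`). -/
def B11set (n : ℕ) (M : Finset (ℕ × ℕ)) (i k t : ℕ) : Finset (ℕ × ℕ) :=
  (Bset n M i).filter fun q =>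
    1 < q.1 ∧ q.1 < k ∧ t < q.2 ∧ q.2 < k ∧
      (q.1, t) ∈ Bset n M (i - 1) ∧ (k, q.2) ∈ Bset n M (i - 1)

/-- The elements `ỹ_{ab}` of the localization `S(ℒ_{i−1})_z`, `z = y_{kt}`,
given by the formulas (4)–(6) of the paper:
* `ỹ_{ab} = (y_{ab}y_{kt} − y_{at}y_{kb})·y_{kt}^{−1}` for `(a,b) ∈ B_i^{(1.1)}`;
* `ỹ_{ak} = (y_{ak}y_{kt} + ∑_{(j,t) ∈ B_{i−1}, j ≠ k} y_{aj}y_{jt})·y_{kt}^{−1}`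
  for `(a,k) ∈ B_i^{(3)}` (i.e. `p ≤ a ≤ n`);
* `ỹ_{ab} = y_{ab}` for all remaining `(a,b) ∈ B_i`;
and `ỹ_{ab} = 0` for `(a,b) ∈ M` (everything is mod `𝔪`). -/
noncomputable def ytilde (K : Type) [Field K] (n : ℕ) (M : Finset (ℕ × ℕ))
    (i k t p : ℕ) (hmem : (k, t) ∈ B0 n M) (q : ℕ × ℕ) :
    LocAway K n M ⟨(k, t), hmem⟩ :=
  if q ∈ B11set n M i k t then
    (Xloc K n M ⟨(k, t), hmem⟩ q * Xloc K n M ⟨(k, t), hmem⟩ (k, t)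
      - Xloc K n M ⟨(k, t), hmem⟩ (q.1, t) * Xloc K n M ⟨(k, t), hmem⟩ (k, q.2))
      * invZ K n M ⟨(k, t), hmem⟩
  else if q.2 = k ∧ p ≤ q.1 ∧ q ∈ Bset n M i then
    (Xloc K n M ⟨(k, t), hmem⟩ q * Xloc K n M ⟨(k, t), hmem⟩ (k, t)
      + ∑ j ∈ Finset.range (n + 1),
          if (j, t) ∈ Bset n M (i - 1) ∧ j ≠ k then
            Xloc K n M ⟨(k, t), hmem⟩ (q.1, j) * Xloc K n M ⟨(k, t), hmem⟩ (j, t)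
          else 0)
      * invZ K n M ⟨(k, t), hmem⟩
  else if q ∈ Bset n M i then Xloc K n M ⟨(k, t), hmem⟩ q
  else 0

section Aux

variable {K : Type} [Field K] {n : ℕ} {M : Finset (ℕ × ℕ)}

lemma mem_placesA {q : ℕ × ℕ} : q ∈ placesA n ↔ q.1 ≤ n ∧ 1 ≤ q.2 ∧ q.2 < q.1 := by
  simp only [placesA, Finset.mem_filter, Finset.mem_product, Finset.mem_range]
  omega

lemma mem_B0 {q : ℕ × ℕ} : q ∈ B0 n M ↔ q ∈ placesA n ∧ q ∉ M := Finset.mem_sdiff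

lemma Bset_subset_B0 (j : ℕ) : Bset n M j ⊆ B0 n M := by
  induction j with
  | zero => exact subset_rfl
  | succ j ih => exact (Finset.sdiff_subset).trans ih

lemma pb_add_left (P Q R : PolyL K n M) :
    pb K n M (P + Q) R = pb K n M P R + pb K n M Q R := by
  simp [pb, map_add, add_mul, Finset.sum_add_distrib]

lemma pb_add_right (P Q R : PolyL K n M) :
    pb K n M P (Q + R) = pb K n M P Q + pb K n M P R := by
  simp [pb, map_add, add_mul, mul_add, Finset.sum_add_distrib]

lemma pb_zero_left (R : PolyL K n M) : pb K n M 0 R = 0 := by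
  simp [pb]

lemma pb_zero_right (R : PolyL K n M) : pb K n M R 0 = 0 := by
  simp [pb]

lemma pb_neg_right (P Q : PolyL K n M) : pb K n M P (-Q) = -pb K n M P Q := by
  simp [pb, map_neg, mul_neg, neg_mul, Finset.sum_neg_distrib]

lemma pb_sub_right (P Q R : PolyL K n M) :
    pb K n M P (Q - R) = pb K n M P Q - pb K n M P R := by
  rw [sub_eq_add_neg, pb_add_right, pb_neg_right, sub_eq_add_neg]

lemma pb_neg_left (P Q : PolyL K n M) : pb K n M (-P) Q = -pb K n M P Q := by
  simp [pb, map_neg, mul_neg, neg_mul, Finset.sum_neg_distrib]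

lemma pb_sub_left (P Q R : PolyL K n M) :
    pb K n M (P - Q) R = pb K n M P R - pb K n M Q R := by
  rw [sub_eq_add_neg, pb_add_left, pb_neg_left, sub_eq_add_neg]

lemma pb_sum_left {ι : Type*} (s : Finset ι) (f : ι → PolyL K n M) (R : PolyL K n M) :
    pb K n M (∑ j ∈ s, f j) R = ∑ j ∈ s, pb K n M (f j) R := by
  classical
  induction s using Finset.induction with
  | empty => simp [pb_zero_left]
  | insert _ _ hx ih => rw [Finset.sum_insert hx, Finset.sum_insert hx, pb_add_left, ih]

lemma pb_mul_left (U V W : PolyL K n M) :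
    pb K n M (U * V) W = pb K n M U W * V + U * pb K n M V W := by
  simp only [pb, pderiv_mul, Finset.sum_mul, Finset.mul_sum]
  rw [← Finset.sum_add_distrib]
  refine Finset.sum_congr rfl fun η _ => ?_
  rw [← Finset.sum_add_distrib]
  refine Finset.sum_congr rfl fun ζ _ => ?_
  ring

lemma pb_mul_right (U W Y : PolyL K n M) :
    pb K n M U (W * Y) = pb K n M U W * Y + W * pb K n M U Y := by
  simp only [pb, pderiv_mul, Finset.sum_mul, Finset.mul_sum]
  rw [← Finset.sum_add_distrib]
  refine Finset.sum_congr rfl fun η _ => ?_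
  rw [← Finset.sum_add_distrib]
  refine Finset.sum_congr rfl fun ζ _ => ?_
  ring

lemma pb_mul_mul (U V W Y : PolyL K n M) :
    pb K n M (U * V) (W * Y) =
      pb K n M U W * V * Y + pb K n M U Y * V * W
        + pb K n M V W * U * Y + pb K n M V Y * U * W := by
  rw [pb_mul_left, pb_mul_right, pb_mul_right]
  ring

lemma pb_X_X (η ζ : Pl n M) :
    pb K n M (X η) (X ζ) = structConst K n M η ζ := by
  classical
  simp only [pb, pderiv_X, Pi.single_apply]
  rw [Finset.sum_eq_single η]
  · rw [Finset.sum_eq_single ζ]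
    · simp
    · intro b _ hb; simp [Ne.symm hb]
    · simp
  · intro b _ hb
    rw [Finset.sum_eq_zero]
    intro ζ' _
    simp [Ne.symm hb]
  · simp

end Aux
section Aux2

variable {K : Type} [Field K] {n : ℕ} {M : Finset (ℕ × ℕ)}

/-- Polynomial version of `Xloc`. -/
noncomputable def Xp (K : Type) [Field K] (n : ℕ) (M : Finset (ℕ × ℕ)) (q : ℕ × ℕ) :
    PolyL K n M :=
  if h : q ∈ B0 n M then X ⟨q, h⟩ else 0

lemma Xloc_eq_map (v : Pl n M) (q : ℕ × ℕ) :
    Xloc K n M v q = algebraMap (PolyL K n M) (LocAway K n M v) (Xp K n M q) := by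
  unfold Xloc Xp
  split <;> simp

lemma Xp_eq_zero {q : ℕ × ℕ} (h : q ∉ B0 n M) : Xp K n M q = 0 := dif_neg h

lemma pb_Xp_Xp {q r : ℕ × ℕ} (hq : q ∈ B0 n M) (hr : r ∈ B0 n M) :
    pb K n M (Xp K n M q) (Xp K n M r) =
      (if q.2 = r.1 then Xp K n M (q.1, r.2) else 0)
        - (if r.2 = q.1 then Xp K n M (r.1, q.2) else 0) := by
  unfold Xp
  rw [dif_pos hq, dif_pos hr, pb_X_X]
  unfold structConst
  congr 1
  · by_cases h1 : q.2 = r.1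
    · by_cases h2 : (q.1, r.2) ∈ B0 n M
      · rw [dif_pos ⟨h1, h2⟩, if_pos h1, dif_pos h2]
      · rw [dif_neg (by tauto), if_pos h1, dif_neg h2]
    · rw [dif_neg (by tauto), if_neg h1]
  · by_cases h1 : r.2 = q.1
    · by_cases h2 : (r.1, q.2) ∈ B0 n M
      · rw [dif_pos ⟨h1, h2⟩, if_pos h1, dif_pos h2]
      · rw [dif_neg (by tauto), if_pos h1, dif_neg h2]
    · rw [dif_neg (by tauto), if_neg h1]

end Aux2
set_option maxHeartbeats 4000000 in
set_option synthInstance.maxHeartbeats 1000000 in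
theorem case3_aux (K : Type) [Field K] [CharZero K]
    (n s : ℕ) (hn : 2 ≤ n) (M : Finset (ℕ × ℕ))
    (hM : IsIdealSet n M) (hs : IsNumSteps n M s)
    (i k t p : ℕ) (hi1 : 1 ≤ i) (his : i ≤ s)
    (hkt : xiStep n M i = (k, t)) (hmem : (k, t) ∈ B0 n M)
    (hkp : k < p) (hMp : ∀ j, (j, t) ∈ M ↔ p ≤ j ∧ j ≤ n) :
    ∀ β : PoissonStr K (LocAway K n M ⟨(k, t), hmem⟩),
      (∀ P Q : PolyL K n M,
        β.br (algebraMap _ _ P) (algebraMap _ _ Q) =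
          algebraMap _ _ (pb K n M P Q)) →
      ∀ a b c : ℕ, p ≤ a → a ≤ n → (a, k) ∈ Bset n M i →
        (b, c) ∈ B11set n M i k t →
        β.br (ytilde K n M i k t p hmem (a, k)) (ytilde K n M i k t p hmem (b, c)) = 0 := by
  classical
  intro β hβ a b c hpa han hak hbc
  set φ := algebraMap (PolyL K n M) (LocAway K n M ⟨(k, t), hmem⟩) with hφ
  set w := invZ K n M (⟨(k, t), hmem⟩ : Pl n M) with hw
  -- basic membership facts
  obtain ⟨hbcB, hb1, hbk, htc, hck, hbt, hkc⟩ := Finset.mem_filter.mp hbc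
  have hktA := mem_placesA.mp (mem_B0.mp hmem).1
  have hak0 : (a, k) ∈ B0 n M := Bset_subset_B0 i hak
  have hakA := mem_placesA.mp (mem_B0.mp hak0).1
  have hbc0 : (b, c) ∈ B0 n M := Bset_subset_B0 i hbcB
  have hbcA := mem_placesA.mp (mem_B0.mp hbc0).1
  have hbt0 : (b, t) ∈ B0 n M := Bset_subset_B0 _ hbt
  have hkc0 : (k, c) ∈ B0 n M := Bset_subset_B0 _ hkc
  simp only at hktA hakA hbcA
  have hatM : (a, t) ∈ M := (hMp a).mpr ⟨hpa, han⟩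
  have hat0 : (a, t) ∉ B0 n M := fun h => (mem_B0.mp h).2 hatM
  have hXpat : Xp K n M (a, t) = 0 := Xp_eq_zero hat0
  -- the two polynomials
  set P₁ : PolyL K n M :=
    Xp K n M (a, k) * Xp K n M (k, t) +
      ∑ j ∈ Finset.range (n + 1),
        if (j, t) ∈ Bset n M (i - 1) ∧ j ≠ k then Xp K n M (a, j) * Xp K n M (j, t)
        else 0 with hP₁
  set P₂ : PolyL K n M :=
    Xp K n M (b, c) * Xp K n M (k, t) - Xp K n M (b, t) * Xp K n M (k, c) with hP₂
  -- elementary bracket claims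
  have hq_ak_bc : pb K n M (Xp K n M (a, k)) (Xp K n M (b, c)) = 0 := by
    rw [pb_Xp_Xp hak0 hbc0]
    simp [show k ≠ b by omega, show c ≠ a by omega]
  have hq_ak_kt : pb K n M (Xp K n M (a, k)) (Xp K n M (k, t)) = 0 := by
    rw [pb_Xp_Xp hak0 hmem]
    simp [hXpat, show t ≠ a by omega]
  have hq_ak_bt : pb K n M (Xp K n M (a, k)) (Xp K n M (b, t)) = 0 := by
    rw [pb_Xp_Xp hak0 hbt0]
    simp [show k ≠ b by omega, show t ≠ a by omega]
  have hq_ak_kc : pb K n M (Xp K n M (a, k)) (Xp K n M (k, c)) = Xp K n M (a, c) := by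
    rw [pb_Xp_Xp hak0 hkc0]
    simp [show c ≠ a by omega]
  have hq_kt_bc : pb K n M (Xp K n M (k, t)) (Xp K n M (b, c)) = 0 := by
    rw [pb_Xp_Xp hmem hbc0]
    simp [show t ≠ b by omega, show c ≠ k by omega]
  have hq_kt_kt : pb K n M (Xp K n M (k, t)) (Xp K n M (k, t)) = 0 := by
    rw [pb_Xp_Xp hmem hmem]
    simp [show t ≠ k by omega]
  have hq_kt_bt : pb K n M (Xp K n M (k, t)) (Xp K n M (b, t)) = 0 := by
    rw [pb_Xp_Xp hmem hbt0]
    simp [show t ≠ b by omega, show t ≠ k by omega]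
  have hq_kt_kc : pb K n M (Xp K n M (k, t)) (Xp K n M (k, c)) = 0 := by
    rw [pb_Xp_Xp hmem hkc0]
    simp [show t ≠ k by omega, show c ≠ k by omega]
  have hq_bc_kt : pb K n M (Xp K n M (b, c)) (Xp K n M (k, t)) = 0 := by
    rw [pb_Xp_Xp hbc0 hmem]
    simp [show c ≠ k by omega, show t ≠ b by omega]
  have hq_bt_kt : pb K n M (Xp K n M (b, t)) (Xp K n M (k, t)) = 0 := by
    rw [pb_Xp_Xp hbt0 hmem]
    simp [show t ≠ k by omega, show t ≠ b by omega]
  have hq_kc_kt : pb K n M (Xp K n M (k, c)) (Xp K n M (k, t)) = 0 := by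
    rw [pb_Xp_Xp hkc0 hmem]
    simp [show c ≠ k by omega, show t ≠ k by omega]
  -- per-j facts
  have hjfacts : ∀ j : ℕ, (j, t) ∈ Bset n M (i - 1) → j ≠ k →
      (j, t) ∈ B0 n M ∧ t < j ∧ j ≤ n ∧ j < p := by
    intro j hj hjk
    have h0 : (j, t) ∈ B0 n M := Bset_subset_B0 _ hj
    have hA := mem_placesA.mp (mem_B0.mp h0).1
    simp only at hA
    have hnM : (j, t) ∉ M := (mem_B0.mp h0).2
    have : ¬(p ≤ j ∧ j ≤ n) := fun h => hnM ((hMp j).mpr h)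
    exact ⟨h0, hA.2.2, hA.1, by omega⟩
  have hXv : Xp K n M (k, t) = X (⟨(k, t), hmem⟩ : Pl n M) := dif_pos hmem
  -- the three polynomial identities
  have h1 : pb K n M P₁ (X (⟨(k, t), hmem⟩ : Pl n M)) = 0 := by
    rw [← hXv, hP₁, pb_add_left, pb_mul_left, hq_ak_kt, hq_kt_kt, pb_sum_left]
    have hs0 : ∀ j ∈ Finset.range (n + 1),
        pb K n M (if (j, t) ∈ Bset n M (i - 1) ∧ j ≠ k then
          Xp K n M (a, j) * Xp K n M (j, t) else 0) (Xp K n M (k, t)) = 0 := by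
      intro j hj
      by_cases hcond : (j, t) ∈ Bset n M (i - 1) ∧ j ≠ k
      · obtain ⟨hj0, htj, hjn, hjp⟩ := hjfacts j hcond.1 hcond.2
        have e1 : pb K n M (Xp K n M (a, j)) (Xp K n M (k, t)) = 0 := by
          by_cases haj : (a, j) ∈ B0 n M
          · rw [pb_Xp_Xp haj hmem]; simp [hcond.2, show t ≠ a by omega]
          · rw [Xp_eq_zero haj, pb_zero_left]
        have e2 : pb K n M (Xp K n M (j, t)) (Xp K n M (k, t)) = 0 := by
          rw [pb_Xp_Xp hj0 hmem]; simp [show t ≠ k by omega, show t ≠ j by omega]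
        rw [if_pos hcond, pb_mul_left, e1, e2]; ring
      · rw [if_neg hcond, pb_zero_left]
    rw [Finset.sum_eq_zero hs0]; ring
  have h2 : pb K n M P₂ (X (⟨(k, t), hmem⟩ : Pl n M)) = 0 := by
    rw [← hXv, hP₂, pb_sub_left, pb_mul_left, pb_mul_left, hq_bc_kt, hq_kt_kt,
      hq_bt_kt, hq_kc_kt]
    ring
  have h3 : pb K n M P₁ P₂ = 0 := by
    have hfirst : pb K n M (Xp K n M (a, k) * Xp K n M (k, t)) P₂ =
        -(Xp K n M (a, c) * Xp K n M (k, t) * Xp K n M (b, t)) := by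
      rw [hP₂, pb_sub_right, pb_mul_mul, pb_mul_mul, hq_ak_bc, hq_ak_kt, hq_ak_bt,
        hq_ak_kc, hq_kt_bc, hq_kt_kt, hq_kt_bt, hq_kt_kc]
      ring
    have hsum : ∑ j ∈ Finset.range (n + 1),
        pb K n M (if (j, t) ∈ Bset n M (i - 1) ∧ j ≠ k then
          Xp K n M (a, j) * Xp K n M (j, t) else 0) P₂ =
        Xp K n M (a, c) * Xp K n M (b, t) * Xp K n M (k, t) := by
      rw [Finset.sum_eq_single_of_mem b (Finset.mem_range.mpr (by omega : b < n + 1))]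
      · rw [if_pos (⟨hbt, by omega⟩ : (b, t) ∈ Bset n M (i - 1) ∧ b ≠ k)]
        have e_ab_bc : pb K n M (Xp K n M (a, b)) (Xp K n M (b, c)) = Xp K n M (a, c) := by
          by_cases hab : (a, b) ∈ B0 n M
          · rw [pb_Xp_Xp hab hbc0]; simp [show c ≠ a by omega]
          · have habM : (a, b) ∈ M := by
              have hA : (a, b) ∈ placesA n := mem_placesA.mpr ⟨han, by omega, by omega⟩
              by_contra hc
              exact hab (mem_B0.mpr ⟨hA, hc⟩)
            have hacM : (a, c) ∈ M := hM.2.1 (a, b) habM c (by omega) (by omega)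
            rw [Xp_eq_zero hab, pb_zero_left,
              Xp_eq_zero (fun h => (mem_B0.mp h).2 hacM)]
        have e_ab_kt : pb K n M (Xp K n M (a, b)) (Xp K n M (k, t)) = 0 := by
          by_cases hab : (a, b) ∈ B0 n M
          · rw [pb_Xp_Xp hab hmem]; simp [show b ≠ k by omega, show t ≠ a by omega]
          · rw [Xp_eq_zero hab, pb_zero_left]
        have e_ab_bt : pb K n M (Xp K n M (a, b)) (Xp K n M (b, t)) = 0 := by
          by_cases hab : (a, b) ∈ B0 n M
          · rw [pb_Xp_Xp hab hbt0]; simp [hXpat, show t ≠ a by omega]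
          · rw [Xp_eq_zero hab, pb_zero_left]
        have e_ab_kc : pb K n M (Xp K n M (a, b)) (Xp K n M (k, c)) = 0 := by
          by_cases hab : (a, b) ∈ B0 n M
          · rw [pb_Xp_Xp hab hkc0]; simp [show b ≠ k by omega, show c ≠ a by omega]
          · rw [Xp_eq_zero hab, pb_zero_left]
        have e_bt_bc : pb K n M (Xp K n M (b, t)) (Xp K n M (b, c)) = 0 := by
          rw [pb_Xp_Xp hbt0 hbc0]; simp [show t ≠ b by omega, show c ≠ b by omega]
        have e_bt_bt : pb K n M (Xp K n M (b, t)) (Xp K n M (b, t)) = 0 := by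
          rw [pb_Xp_Xp hbt0 hbt0]; simp [show t ≠ b by omega]
        have e_bt_kc : pb K n M (Xp K n M (b, t)) (Xp K n M (k, c)) = 0 := by
          rw [pb_Xp_Xp hbt0 hkc0]; simp [show t ≠ k by omega, show c ≠ b by omega]
        rw [hP₂, pb_sub_right, pb_mul_mul, pb_mul_mul, e_ab_bc, e_ab_kt, e_ab_bt,
          e_ab_kc, e_bt_bc, hq_bt_kt, e_bt_bt, e_bt_kc]
        ring
      · intro j hjr hjb
        by_cases hcond : (j, t) ∈ Bset n M (i - 1) ∧ j ≠ k
        · obtain ⟨hj0, htj, hjn, hjp⟩ := hjfacts j hcond.1 hcond.2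
          have f1 : pb K n M (Xp K n M (a, j)) (Xp K n M (b, c)) = 0 := by
            by_cases haj : (a, j) ∈ B0 n M
            · rw [pb_Xp_Xp haj hbc0]; simp [hjb, show c ≠ a by omega]
            · rw [Xp_eq_zero haj, pb_zero_left]
          have f2 : pb K n M (Xp K n M (a, j)) (Xp K n M (k, t)) = 0 := by
            by_cases haj : (a, j) ∈ B0 n M
            · rw [pb_Xp_Xp haj hmem]; simp [hcond.2, show t ≠ a by omega]
            · rw [Xp_eq_zero haj, pb_zero_left]
          have f3 : pb K n M (Xp K n M (a, j)) (Xp K n M (b, t)) = 0 := by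
            by_cases haj : (a, j) ∈ B0 n M
            · rw [pb_Xp_Xp haj hbt0]; simp [hXpat, show t ≠ a by omega]
            · rw [Xp_eq_zero haj, pb_zero_left]
          have f4 : pb K n M (Xp K n M (a, j)) (Xp K n M (k, c)) = 0 := by
            by_cases haj : (a, j) ∈ B0 n M
            · rw [pb_Xp_Xp haj hkc0]; simp [hcond.2, show c ≠ a by omega]
            · rw [Xp_eq_zero haj, pb_zero_left]
          have f5 : pb K n M (Xp K n M (j, t)) (Xp K n M (b, c)) =
              -(if c = j then Xp K n M (b, t) else 0) := by
            rw [pb_Xp_Xp hj0 hbc0]; simp [show t ≠ b by omega]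
          have f6 : pb K n M (Xp K n M (j, t)) (Xp K n M (k, t)) = 0 := by
            rw [pb_Xp_Xp hj0 hmem]; simp [show t ≠ k by omega, show t ≠ j by omega]
          have f7 : pb K n M (Xp K n M (j, t)) (Xp K n M (b, t)) = 0 := by
            rw [pb_Xp_Xp hj0 hbt0]; simp [show t ≠ b by omega, show t ≠ j by omega]
          have f8 : pb K n M (Xp K n M (j, t)) (Xp K n M (k, c)) =
              -(if c = j then Xp K n M (k, t) else 0) := by
            rw [pb_Xp_Xp hj0 hkc0]; simp [show t ≠ k by omega]
          rw [if_pos hcond, hP₂, pb_sub_right, pb_mul_mul, pb_mul_mul, f1, f2, f3,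
            f4, f5, f6, f7, f8]
          by_cases hcj : c = j
          · simp only [if_pos hcj]; ring
          · simp only [if_neg hcj]; ring
        · rw [if_neg hcond, pb_zero_left]
    rw [hP₁, pb_add_left, pb_sum_left, hfirst, hsum]
    ring
  -- rewrite the goal
  have hnot11 : (a, k) ∉ B11set n M i k t := by
    intro h
    have h2' : a < k := (Finset.mem_filter.mp h).2.2.1
    omega
  have hy1 : ytilde K n M i k t p hmem (a, k) = φ P₁ * w := by
    unfold ytilde
    rw [if_neg hnot11,
      if_pos (⟨rfl, hpa, hak⟩ : (a, k).2 = k ∧ p ≤ (a, k).1 ∧ (a, k) ∈ Bset n M i),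
      hP₁, hw, hφ]
    set_option synthInstance.maxHeartbeats 1000000 in
    simp only [map_add, map_mul, map_sum,
      apply_ite (algebraMap (PolyL K n M) (LocAway K n M ⟨(k, t), hmem⟩)), map_zero,
      Xloc_eq_map]
  have hy2 : ytilde K n M i k t p hmem (b, c) = φ P₂ * w := by
    unfold ytilde
    rw [if_pos hbc, hP₂, hw, hφ]
    set_option synthInstance.maxHeartbeats 1000000 in
    simp only [map_sub, map_mul, Xloc_eq_map]
  rw [hy1, hy2]
  -- localization bookkeeping
  have hzw : φ (X (⟨(k, t), hmem⟩ : Pl n M)) * w = 1 := by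
    rw [hw, hφ, invZ]
    exact IsLocalization.Away.mul_invSelf _
  have hbone : ∀ u, β.br u 1 = 0 := by
    intro u
    have h := β.leibniz u 1 1
    rw [mul_one] at h
    linear_combination -h
  have hbrw : ∀ P : PolyL K n M, pb K n M P (X (⟨(k, t), hmem⟩ : Pl n M)) = 0 → β.br (φ P) w = 0 := by
    intro P h
    have h1' : β.br (φ P) (φ (X (⟨(k, t), hmem⟩ : Pl n M)) * w) =
        β.br (φ P) (φ (X (⟨(k, t), hmem⟩ : Pl n M))) * w + φ (X (⟨(k, t), hmem⟩ : Pl n M)) * β.br (φ P) w := β.leibniz _ _ _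
    rw [hzw, hbone, hβ, h, map_zero, zero_mul, zero_add] at h1'
    linear_combination (-w) * h1' - β.br (φ P) w * hzw
  have hzz : pb K n M (X (⟨(k, t), hmem⟩ : Pl n M)) (X (⟨(k, t), hmem⟩ : Pl n M)) = 0 := by
    have : Xp K n M (k, t) = X (⟨(k, t), hmem⟩ : Pl n M) := dif_pos hmem
    rw [← this]; exact hq_kt_kt
  have hbrP1w : β.br (φ P₁) w = 0 := hbrw P₁ h1
  have hbrP2w : β.br (φ P₂) w = 0 := hbrw P₂ h2
  have hwz : β.br w (φ (X (⟨(k, t), hmem⟩ : Pl n M))) = 0 := by rw [β.skew, hbrw _ hzz, neg_zero]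
  have hww : β.br w w = 0 := by
    have h1' : β.br w (φ (X (⟨(k, t), hmem⟩ : Pl n M)) * w) =
        β.br w (φ (X (⟨(k, t), hmem⟩ : Pl n M))) * w + φ (X (⟨(k, t), hmem⟩ : Pl n M)) * β.br w w := β.leibniz _ _ _
    rw [hzw, hbone, hwz, zero_mul, zero_add] at h1'
    linear_combination (-w) * h1' - β.br w w * hzw
  have b12 : β.br (φ P₁) (φ P₂) = 0 := by rw [hβ, h3, map_zero]
  have b21 : β.br (φ P₂) (φ P₁) = 0 := by rw [β.skew, b12, neg_zero]
  have bw1 : β.br w (φ P₁) = 0 := by rw [β.skew, hbrP1w, neg_zero]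
  have t1 : β.br (φ P₁ * w) (φ P₂) = 0 := by
    rw [β.skew, β.leibniz, b21, hbrP2w, zero_mul, mul_zero, add_zero, neg_zero]
  have t2 : β.br (φ P₁ * w) w = 0 := by
    rw [β.skew, β.leibniz, bw1, hww, zero_mul, mul_zero, add_zero, neg_zero]
  rw [β.leibniz, t1, t2, zero_mul, mul_zero, add_zero]

/-- **Case 3 of the proof of Theorem 1.**  Write `ξ_i = (k,t)`, and let `p > k`
be such that the elements of `M` in column `t` are exactly `{(j,t) : p ≤ j ≤ n}`.
For `(a,k) ∈ B_i^{(3)}` (i.e. `p ≤ a ≤ n`) let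
`ỹ_{ak} = (y_{ak}y_{kt} + ∑_{(j,t) ∈ B_{i−1}} y_{aj}y_{jt})·y_{kt}^{−1}`, and for
`(b,c) ∈ B_i^{(1.1)}` let `ỹ_{bc} = (y_{bc}y_{kt} − y_{bt}y_{kc})·y_{kt}^{−1}`.
Then in the localized Poisson algebra `S(ℒ_{i−1})_{y_{kt}}` one has
`{ỹ_{ak}, ỹ_{bc}} = 0 mod 𝔪`. -/
theorem case3_bracket_vanishes (K : Type) [Field K] [CharZero K]
    (n s : ℕ) (hn : 2 ≤ n) (M : Finset (ℕ × ℕ))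
    (hM : IsIdealSet n M) (hs : IsNumSteps n M s)
    (i k t p : ℕ) (hi1 : 1 ≤ i) (his : i ≤ s)
    (hkt : xiStep n M i = (k, t)) (hmem : (k, t) ∈ B0 n M)
    (hkp : k < p) (hMp : ∀ j, (j, t) ∈ M ↔ p ≤ j ∧ j ≤ n) :
    ∀ β : PoissonStr K (LocAway K n M ⟨(k, t), hmem⟩),
      (∀ P Q : PolyL K n M,
        β.br (algebraMap _ _ P) (algebraMap _ _ Q) =
          algebraMap _ _ (pb K n M P Q)) →
      ∀ a b c : ℕ, p ≤ a → a ≤ n → (a, k) ∈ Bset n M i →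
        (b, c) ∈ B11set n M i k t →
        β.br (ytilde K n M i k t p hmem (a, k)) (ytilde K n M i k t p hmem (b, c)) = 0 :=
  case3_aux K n s hn M hM hs i k t p hi1 his hkt hmem hkp hMp
end Panov
end
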